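/- Let k ≥ 2 be an integer and let G be a finite simple graph containing no cycle on 2k+1 vertices as a subgraph. Let v, x, y, b be four distinct vertices of G such that xy, yb, and bv are edges of G, let X ⊆ N(v) ∩ N(x), and let T be a set of vertices of G such that X and T are disjoint and both are disjoint from {v, x, y, b}. Then the bipartite subgraph of G consisting of exactly those edges with one endpoint in X and one endpoint in T contains no path on 2k−1 vertices as a subgraph. -/

import Mathlib

open SimpleGraph

/-- `G.ContainsSub H` means `G` contains a copy of `H` as a (not necessarily induced)
subgraph, i.e. there is an injective graph homomorphism from `H` to `G`. -/
def SimpleGraph.ContainsSub {V W : Type*} (G : SimpleGraph V) (H : SimpleGraph W) : Prop :=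
  ∃ f : W → V, Function.Injective f ∧ ∀ a b, H.Adj a b → G.Adj (f a) (f b)

/-- The bipartite subgraph of `G` consisting of exactly those edges with one
endpoint in `S` and the other endpoint in `T`. -/
def SimpleGraph.betweenGraph {V : Type*} (G : SimpleGraph V) (S T : Set V) : SimpleGraph V where
  Adj a b := G.Adj a b ∧ ((a ∈ S ∧ b ∈ T) ∨ (a ∈ T ∧ b ∈ S))
  symm := by
    constructor
    intro a b h
    exact ⟨h.1.symm, h.2.elim (fun hab => Or.inr ⟨hab.2, hab.1⟩) (fun hab => Or.inl ⟨hab.2, hab.1⟩)⟩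
  loopless := by
    constructor
    intro a h
    exact G.loopless.irrefl a h.1

/-- Claim 3.4(2): if `G` is `C_{2k+1}`-free, `v, x, y, b` are distinct vertices with
`xy, yb, bv ∈ E(G)`, `X ⊆ N(v) ∩ N(x)`, and `T` is disjoint from `X` with both
`X` and `T` disjoint from `{v, x, y, b}`, then the bipartite subgraph of edges between
`X` and `T` is `P_{2k-1}`-free. -/
lemma key_cycle {V : Type*} (G : SimpleGraph V) (m : ℕ)
    (v x y b : V)
    (hvx : v ≠ x) (hvy : v ≠ y) (hvb : v ≠ b) (hxy : x ≠ y) (hxb : x ≠ b) (hyb : y ≠ b)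
    (hexy : G.Adj x y) (heyb : G.Adj y b) (hebv : G.Adj b v)
    (X T : Set V)
    (hX : X ⊆ G.neighborSet v ∩ G.neighborSet x)
    (hX4 : Disjoint X {v, x, y, b}) (hT4 : Disjoint T ({v, x, y, b} : Set V))
    (q : ℕ → V)
    (hqinj : ∀ i j, i < 2*m+1 → j < 2*m+1 → q i = q j → i = j)
    (hqadj : ∀ i, i+1 < 2*m+1 → G.Adj (q i) (q (i+1)))
    (hqmem : ∀ i, i < 2*m+1 → q i ∈ X ∪ T)
    (hq0 : q 0 ∈ X) (hqlast : q (2*m) ∈ X) :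
    G.ContainsSub (cycleGraph (2*m+5)) := by
  classical
  set g : ℕ → V := fun i =>
    if i < 2*m+1 then q i else
    if i = 2*m+1 then x else
    if i = 2*m+2 then y else
    if i = 2*m+3 then b else v with hg
  have g0 : ∀ i, i < 2*m+1 → g i = q i := by intro i hi; rw [hg]; exact if_pos hi
  have g1 : g (2*m+1) = x := by simp [hg]
  have g2 : g (2*m+2) = y := by simp [hg]
  have g3 : g (2*m+3) = b := by simp [hg]
  have g4 : g (2*m+4) = v := by simp [hg]
  -- every g value at index ≥ 2m+1 is one of x,y,b,v
  have gnotmem : ∀ j, 2*m+1 ≤ j → j < 2*m+5 → g j ∉ X ∪ T := by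
    intro j h1 h2
    have : g j ∈ ({v, x, y, b} : Set V) := by
      rcases (by omega : j = 2*m+1 ∨ j = 2*m+2 ∨ j = 2*m+3 ∨ j = 2*m+4) with h|h|h|h <;>
        subst h <;> simp [g1, g2, g3, g4]
    intro hmem
    rcases hmem with hmem | hmem
    · exact Set.disjoint_left.mp hX4 hmem this
    · exact Set.disjoint_left.mp hT4 hmem this
  have ginj : ∀ i j, i < 2*m+5 → j < 2*m+5 → g i = g j → i = j := by
    intro i j hi hj h
    by_cases h1 : i < 2*m+1 <;> by_cases h2 : j < 2*m+1
    · rw [g0 i h1, g0 j h2] at h; exact hqinj i j h1 h2 h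
    · exfalso; apply gnotmem j (by omega) hj
      rw [← h, g0 i h1]; exact hqmem i h1
    · exfalso; apply gnotmem i (by omega) hi
      rw [h, g0 j h2]; exact hqmem j h2
    · rcases (by omega : i = 2*m+1 ∨ i = 2*m+2 ∨ i = 2*m+3 ∨ i = 2*m+4) with h3|h3|h3|h3 <;>
      rcases (by omega : j = 2*m+1 ∨ j = 2*m+2 ∨ j = 2*m+3 ∨ j = 2*m+4) with h4|h4|h4|h4 <;>
      subst h3 <;> subst h4 <;>
      simp only [g1, g2, g3, g4] at h <;> first | rfl | (exfalso; tauto)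
  have gadj : ∀ i, i + 1 < 2*m+5 → G.Adj (g i) (g (i+1)) := by
    intro i hi
    by_cases h1 : i + 1 < 2*m+1
    · rw [g0 i (by omega), g0 (i+1) h1]; exact hqadj i h1
    · rcases (by omega : i = 2*m ∨ i = 2*m+1 ∨ i = 2*m+2 ∨ i = 2*m+3) with h|h|h|h <;> subst h
      · rw [g0 (2*m) (by omega)]
        show G.Adj (q (2*m)) (g (2*m+1))
        rw [g1]
        exact ((hX hqlast).2 : G.Adj x (q (2*m))).symm
      · rw [g1]; show G.Adj x (g (2*m+2)); rw [g2]; exact hexy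
      · rw [g2]; show G.Adj y (g (2*m+3)); rw [g3]; exact heyb
      · rw [g3]; show G.Adj b (g (2*m+4)); rw [g4]; exact hebv
  have gwrap : G.Adj (g (2*m+4)) (g 0) := by
    rw [g4, g0 0 (by omega)]
    exact (hX hq0).1
  refine ⟨fun i => g i.val, ?_, ?_⟩
  · intro a c h
    exact Fin.ext (ginj a.val c.val a.isLt c.isLt h)
  · intro a c hac
    rw [cycleGraph_adj'] at hac
    have hone : (1 : Fin (2*m+5)).val = 1 := by
      rw [Fin.val_one']; exact Nat.mod_eq_of_lt (by omega)
    -- reduce to successor form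
    have main : ∀ u w : Fin (2*m+5), (w - u).val = 1 → G.Adj (g u.val) (g w.val) := by
      intro u w hw
      have hw' : w = u + 1 := by
        have : w - u = 1 := Fin.ext (by rw [hw, hone])
        rwa [sub_eq_iff_eq_add'] at this
      have hval : w.val = (u.val + 1) % (2*m+5) := by
        rw [hw', Fin.add_def, hone]
      by_cases hu : u.val = 2*m+4
      · have : w.val = 0 := by rw [hval, hu]; exact Nat.mod_self _
        rw [hu, this]; exact gwrap
      · have hlt : u.val + 1 < 2*m+5 := by have := u.isLt; omega
        have : w.val = u.val + 1 := Eq.trans hval (Nat.mod_eq_of_lt hlt)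
        rw [this]; exact gadj u.val (by omega)
    rcases hac with h | h
    · exact (main c a h).symm
    · exact main a c h

theorem betweenGraph_pathFree_of_oddCycleFree {V : Type*} [Fintype V] [DecidableEq V]
    (k : ℕ) (hk : 2 ≤ k) (G : SimpleGraph V)
    (hfree : ¬ G.ContainsSub (cycleGraph (2 * k + 1)))
    (v x y b : V)
    (hvx : v ≠ x) (hvy : v ≠ y) (hvb : v ≠ b) (hxy : x ≠ y) (hxb : x ≠ b) (hyb : y ≠ b)
    (hexy : G.Adj x y) (heyb : G.Adj y b) (hebv : G.Adj b v)
    (X T : Set V)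
    (hX : X ⊆ G.neighborSet v ∩ G.neighborSet x)
    (hXT : Disjoint X T)
    (hX4 : Disjoint X {v, x, y, b}) (hT4 : Disjoint T ({v, x, y, b} : Set V)) :
    ¬ (G.betweenGraph X T).ContainsSub (pathGraph (2 * k - 1)) := by
  intro hcon
  obtain ⟨m, hm⟩ : ∃ m, k = m + 2 := ⟨k - 2, by omega⟩
  rw [show 2 * k - 1 = 2 * m + 3 by omega] at hcon
  obtain ⟨f, hinj, hhom⟩ := hcon
  classical
  set p : ℕ → V := fun i => if h : i < 2*m+3 then f ⟨i, h⟩ else v with hp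
  have pval : ∀ i (h : i < 2*m+3), p i = f ⟨i, h⟩ := by intro i h; simp [hp, h]
  have hadj : ∀ i, i + 1 < 2*m+3 → (G.betweenGraph X T).Adj (p i) (p (i+1)) := by
    intro i h
    rw [pval i (by omega), pval (i+1) h]
    exact hhom ⟨i, by omega⟩ ⟨i+1, h⟩ (by rw [pathGraph_adj]; left; rfl)
  have pinj : ∀ i j, i < 2*m+3 → j < 2*m+3 → p i = p j → i = j := by
    intro i j hi hj h
    rw [pval i hi, pval j hj] at h
    exact Fin.mk.injEq i hi j hj ▸ congrArg Fin.val (hinj h)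
  have hmem : ∀ i, i < 2*m+3 → p i ∈ X ∪ T := by
    intro i hi
    by_cases h1 : i + 1 < 2*m+3
    · rcases (hadj i h1).2 with ⟨ha, _⟩ | ⟨ha, _⟩
      · exact Or.inl ha
      · exact Or.inr ha
    · have hi' : i = 2*m+2 := by omega
      subst hi'
      rcases (hadj (2*m+1) (by omega)).2 with ⟨_, ha⟩ | ⟨_, ha⟩
      · exact Or.inr ha
      · exact Or.inl ha
  have step : ∀ i, i + 1 < 2*m+3 →
      (p i ∈ X → p (i+1) ∈ T) ∧ (p i ∈ T → p (i+1) ∈ X) := by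
    intro i h
    obtain ⟨-, hcase⟩ := hadj i h
    constructor
    · intro hx
      rcases hcase with ⟨_, h2⟩ | ⟨h1, _⟩
      · exact h2
      · exact absurd h1 (fun h1 => Set.disjoint_left.mp hXT hx h1)
    · intro hx
      rcases hcase with ⟨h1, _⟩ | ⟨_, h2⟩
      · exact absurd h1 (fun h1 => Set.disjoint_left.mp hXT h1 hx)
      · exact h2
  have hGadj : ∀ i, i + 1 < 2*m+3 → G.Adj (p i) (p (i+1)) := fun i h => (hadj i h).1
  apply hfree
  rw [show 2 * k + 1 = 2 * m + 5 by omega]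
  rcases hmem 0 (by omega) with hA | hB
  · -- p 0 ∈ X : use p 0 .. p 2m
    have evens : ∀ i, i ≤ m + 1 → p (2*i) ∈ X := by
      intro i
      induction i with
      | zero => exact fun _ => hA
      | succ n ih =>
        intro h
        have h1 : p (2*n+1) ∈ T := (step (2*n) (by omega)).1 (ih (by omega))
        have h2 : p (2*n+1+1) ∈ X := (step (2*n+1) (by omega)).2 h1
        have : 2*(n+1) = 2*n+1+1 := by omega
        rw [this]; exact h2
    exact key_cycle G m v x y b hvx hvy hvb hxy hxb hyb hexy heyb hebv X T hX hX4 hT4 p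
      (fun i j hi hj => pinj i j (by omega) (by omega))
      (fun i hi => hGadj i (by omega))
      (fun i hi => hmem i (by omega)) hA (evens m (by omega))
  · -- p 0 ∈ T : use p 1 .. p (2m+1)
    have h1 : p 1 ∈ X := (step 0 (by omega)).2 hB
    have odds : ∀ i, i ≤ m → p (2*i+1) ∈ X := by
      intro i
      induction i with
      | zero => exact fun _ => h1
      | succ n ih =>
        intro h
        have ht : p (2*n+1+1) ∈ T := (step (2*n+1) (by omega)).1 (ih (by omega))
        have hx2 : p (2*n+1+1+1) ∈ X := (step (2*n+1+1) (by omega)).2 ht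
        have : 2*(n+1)+1 = 2*n+1+1+1 := by omega
        rw [this]; exact hx2
    have hlast : p (2*m+1) ∈ X := odds m le_rfl
    exact key_cycle G m v x y b hvx hvy hvb hxy hxb hyb hexy heyb hebv X T hX hX4 hT4
      (fun i => p (i+1))
      (fun i j hi hj h => by have := pinj (i+1) (j+1) (by omega) (by omega) h; omega)
      (fun i hi => hGadj (i+1) (by omega))
      (fun i hi => hmem (i+1) (by omega)) h1 hlast
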